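/- Let n ≥ 1, let A be a Hermitian n×n complex matrix all of whose eigenvalues lie in the open interval (−1,1), let f, g ∈ 𝔥, and let X be a normal n×n complex matrix (X*X = XX*) that commutes with A (AX = XA). Then for every unitarily invariant norm N on the n×n complex matrices, N(f(A)Xg(A) + X) ≤ (2/d_A²) · N(A|X|A + |X|). -/

import Mathlib

open Matrix
open scoped ComplexOrder

/-- `f(A)` for a Hermitian matrix `A`, defined via the spectral decomposition:
`f(A) = U diag(f(λ₁),…,f(λₙ)) U*`. -/
noncomputable def herFun {n : ℕ} {A : Matrix (Fin n) (Fin n) ℂ} (hA : A.IsHermitian)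
    (f : ℂ → ℂ) : Matrix (Fin n) (Fin n) ℂ :=
  (hA.eigenvectorUnitary : Matrix (Fin n) (Fin n) ℂ) *
    Matrix.diagonal (fun i => f (hA.eigenvalues i : ℂ)) *
    star (hA.eigenvectorUnitary : Matrix (Fin n) (Fin n) ℂ)

/-- `|X| = (X*X)^{1/2}`, the positive semidefinite absolute value of a matrix. -/
noncomputable def matAbs {n : ℕ} (X : Matrix (Fin n) (Fin n) ℂ) : Matrix (Fin n) (Fin n) ℂ :=
  ((Matrix.posSemidef_conjTranspose_mul_self X).1.eigenvectorUnitary : Matrix (Fin n) (Fin n) ℂ) *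
    Matrix.diagonal ((↑) ∘ Real.sqrt ∘ (Matrix.posSemidef_conjTranspose_mul_self X).1.eigenvalues) *
    (star (Matrix.posSemidef_conjTranspose_mul_self X).1.eigenvectorUnitary : Matrix (Fin n) (Fin n) ℂ)

/-- `d_A = min { 1 - |λⱼ| }`, the distance from the unit circle to the spectrum of a
Hermitian matrix `A` whose eigenvalues lie in `(-1,1)`. -/
noncomputable def dDist {n : ℕ} {A : Matrix (Fin n) (Fin n) ℂ} (hA : A.IsHermitian) : ℝ :=
  ⨅ i, (1 - |hA.eigenvalues i|)

/-- Membership in the class `𝔥`: analytic on the open unit disk, positive real part there,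
and value `1` at the origin. -/
def MemH (f : ℂ → ℂ) : Prop :=
  DifferentiableOn ℂ f (Metric.ball (0 : ℂ) 1) ∧
    (∀ z ∈ Metric.ball (0 : ℂ) 1, 0 < (f z).re) ∧ f 0 = 1

/-- A function `N` on `n × n` complex matrices is a unitarily invariant norm. -/
def IsUnitarilyInvariantNorm {m : Type*} [Fintype m] [DecidableEq m]
    (N : Matrix m m ℂ → ℝ) : Prop :=
  (∀ X, N X = 0 ↔ X = 0) ∧
    (∀ (c : ℂ) X, N (c • X) = ‖c‖ * N X) ∧
    (∀ X Y, N (X + Y) ≤ N X + N Y) ∧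
    (∀ (U V : Matrix.unitaryGroup m ℂ) (X : Matrix m m ℂ),
      N ((U : Matrix m m ℂ) * X * (V : Matrix m m ℂ)) = N X)
lemma memH_abs_le {f : ℂ → ℂ} (hf : MemH f) {z : ℂ} (hz : ‖z‖ < 1) :
    ‖f z‖ ≤ (1 + ‖z‖) / (1 - ‖z‖) := by
  obtain ⟨hdiff, hre, h0⟩ := hf
  have hne : ∀ y ∈ Metric.ball (0 : ℂ) 1, f y + 1 ≠ 0 := by
    intro y hy h
    have h2 : (f y + 1).re = (f y).re + 1 := by simp
    rw [h] at h2
    simp at h2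
    linarith [hre y hy]
  set w : ℂ → ℂ := fun y => (f y - 1) / (f y + 1) with hw
  have hwd : DifferentiableOn ℂ w (Metric.ball (0 : ℂ) 1) :=
    DifferentiableOn.div (hdiff.sub (differentiableOn_const 1))
      (hdiff.add (differentiableOn_const 1)) hne
  have hmaps : Set.MapsTo w (Metric.ball (0 : ℂ) 1) (Metric.ball (0 : ℂ) 1) := by
    intro y hy
    have h1 : ‖f y - 1‖ < ‖f y + 1‖ := by
      rw [Complex.norm_def, Complex.norm_def]
      apply Real.sqrt_lt_sqrt (Complex.normSq_nonneg _)
      rw [Complex.normSq_apply, Complex.normSq_apply]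
      simp only [Complex.sub_re, Complex.sub_im, Complex.add_re, Complex.add_im,
        Complex.one_re, Complex.one_im]
      nlinarith [hre y hy]
    simp only [Metric.mem_ball, dist_zero_right]
    show ‖(f y - 1) / (f y + 1)‖ < 1
    rw [norm_div, div_lt_one (lt_of_le_of_lt (norm_nonneg _) h1)]
    exact h1
  have hw0 : w 0 = 0 := by simp [hw, h0]
  have hsch : ‖w z‖ ≤ ‖z‖ :=
    Complex.norm_le_norm_of_mapsTo_ball hwd (hmaps.mono_right Metric.ball_subset_closedBall) hw0 hz
  have hzball : z ∈ Metric.ball (0 : ℂ) 1 := by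
    simpa [Metric.mem_ball, dist_zero_right] using hz
  have hwz1 : ‖w z‖ < 1 := lt_of_le_of_lt hsch hz
  have hone : (1 : ℂ) - w z ≠ 0 := by
    intro h
    have h2 : w z = 1 := by linear_combination -h
    rw [h2] at hwz1; simp at hwz1
  have hwmul : w z * (f z + 1) = f z - 1 := div_mul_cancel₀ _ (hne z hzball)
  have hfz : f z * (1 - w z) = 1 + w z := by linear_combination -hwmul
  have hfz' : f z = (1 + w z) / (1 - w z) := by
    rw [eq_div_iff hone]; exact hfz
  rw [hfz', norm_div]
  have hd1 : 1 - ‖w z‖ ≤ ‖1 - w z‖ := by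
    have := norm_sub_norm_le (1 : ℂ) (w z)
    simpa using this
  have hn1 : ‖1 + w z‖ ≤ 1 + ‖w z‖ := by
    have := norm_add_le (1 : ℂ) (w z)
    simpa using this
  have hpos : (0:ℝ) < 1 - ‖w z‖ := by linarith
  have hposz : (0:ℝ) < 1 - ‖z‖ := by linarith
  calc ‖1 + w z‖ / ‖1 - w z‖
      ≤ (1 + ‖w z‖) / (1 - ‖w z‖) := by
        exact div_le_div₀ (by positivity) hn1 hpos hd1
    _ ≤ (1 + ‖z‖) / (1 - ‖z‖) := by
        rw [div_le_div_iff₀ hpos hposz]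
        nlinarith [hsch]


lemma exists_unimodular_pair (t : ℂ) (C : ℝ) (hC : 0 ≤ C) (ht : ‖t‖ ≤ C) :
    ∃ u₁ u₂ : ℂ, ‖u₁‖ = 1 ∧ ‖u₂‖ = 1 ∧
      t = ((C : ℂ)/2) * (u₁ + u₂) := by
  rcases eq_or_lt_of_le hC with hC0 | hCpos
  · refine ⟨1, -1, by simp, by simp, ?_⟩
    have : ‖t‖ = 0 := le_antisymm (hC0 ▸ ht) (norm_nonneg t)
    rw [norm_eq_zero.mp this]; simp
  rcases eq_or_ne t 0 with rfl | htne
  · exact ⟨1, -1, by simp, by simp, by simp⟩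
  set s : ℂ := t / (C : ℂ) with hs
  have hsne : s ≠ 0 := div_ne_zero htne (by exact_mod_cast hCpos.ne')
  set a : ℝ := ‖s‖ with ha
  have ha_pos : 0 < a := norm_pos_iff.mpr hsne
  have ha_le : a ≤ 1 := by
    rw [ha, hs, norm_div, Complex.norm_real, Real.norm_eq_abs, abs_of_pos hCpos]
    exact div_le_one_of_le₀ ht hC
  set r : ℝ := Real.sqrt (1 - a ^ 2) with hr
  have hr2 : r ^ 2 = 1 - a ^ 2 := Real.sq_sqrt (by nlinarith)
  set e : ℂ := s / (a : ℂ) with he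
  have habse : ‖e‖ = 1 := by
    rw [he, norm_div, Complex.norm_real, Real.norm_eq_abs, abs_of_pos ha_pos, ← ha, div_self ha_pos.ne']
  have key : ∀ b : ℂ, b.re = a → b.im = r ∨ b.im = -r → ‖e * b‖ = 1 := by
    intro b hbre hbim
    rw [norm_mul, habse, one_mul, Complex.norm_def, Complex.normSq_apply, hbre]
    rcases hbim with h | h <;> rw [h] <;>
      · rw [show a * a + _ * _ = a ^ 2 + r ^ 2 by ring_nf, hr2]
        simp
  refine ⟨e * ((a : ℂ) + (r : ℂ) * Complex.I), e * ((a : ℂ) - (r : ℂ) * Complex.I),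
    key _ (by simp) (Or.inl (by simp)), key _ (by simp) (Or.inr (by simp)), ?_⟩
  have hsum : e * ((a : ℂ) + (r : ℂ) * Complex.I) + e * ((a : ℂ) - (r : ℂ) * Complex.I)
      = 2 * s := by
    have haC : (a : ℂ) ≠ 0 := by exact_mod_cast ha_pos.ne'
    rw [he]
    field_simp
    ring
  rw [hsum]
  rw [hs]
  have : (C : ℂ) ≠ 0 := by exact_mod_cast hCpos.ne'
  field_simp


set_option maxHeartbeats 1000000 in
lemma toEuclideanLin_mul {n : ℕ} (M N : Matrix (Fin n) (Fin n) ℂ) :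
    Matrix.toEuclideanLin (M * N) = (Matrix.toEuclideanLin M) ∘ₗ (Matrix.toEuclideanLin N) := by
  ext v
  simp [Matrix.toEuclideanLin_apply, Matrix.mulVec_mulVec]

lemma joint_eigenbasis {E : Type*} [NormedAddCommGroup E] [InnerProductSpace ℂ E]
    [FiniteDimensional ℂ E] {n : ℕ} (hfr : Module.finrank ℂ E = n)
    (T : Fin 3 → Module.End ℂ E) (hTsymm : ∀ i, (T i).IsSymmetric)
    (hcomm : Pairwise (Function.onFun Commute T)) :
    ∃ (b : OrthonormalBasis (Fin n) ℂ E) (χ : Fin n → Fin 3 → ℂ),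
      ∀ j i, (T i) (b j) = χ j i • b j := by
  classical
  have hinternal :=
    LinearMap.IsSymmetric.LinearMap.IsSymmetric.directSum_isInternal_of_pairwise_commute
      hTsymm hcomm
  have horth := LinearMap.IsSymmetric.orthogonalFamily_iInf_eigenspaces hTsymm
  set V : (Fin 3 → ℂ) → Submodule ℂ E :=
    fun α => ⨅ j, Module.End.eigenspace (T j) (α j) with hV
  haveI : Fintype {α : Fin 3 → ℂ // V α ≠ ⊥} :=
    (hinternal.submodule_iSupIndep).fintypeNeBotOfFiniteDimensional
  set V' : {α : Fin 3 → ℂ // V α ≠ ⊥} → Submodule ℂ E := fun i => V i with hV'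
  have horth' : OrthogonalFamily ℂ (fun i => ↥(V' i)) (fun i => (V' i).subtypeₗᵢ) :=
    fun _i _j hij v w => horth (Subtype.coe_injective.ne hij) v w
  have hsup' : ⨆ i, V' i = ⊤ := by
    refine le_antisymm le_top ?_
    rw [← hinternal.submodule_iSup_eq_top]
    apply iSup_le
    intro α
    by_cases h : V α = ⊥
    · rw [h]; exact bot_le
    · exact le_iSup V' ⟨α, h⟩
  have hinternal' : DirectSum.IsInternal V' := by
    rw [horth'.isInternal_iff]
    rw [hsup', Submodule.top_orthogonal_eq_bot]
  refine ⟨hinternal'.subordinateOrthonormalBasis hfr horth',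
    fun j => (hinternal'.subordinateOrthonormalBasisIndex hfr j horth').val, ?_⟩
  intro j i
  have hmem2 := hinternal'.subordinateOrthonormalBasis_subordinate hfr j horth'
  have hmem3 : hinternal'.subordinateOrthonormalBasis hfr horth' j ∈
      V (hinternal'.subordinateOrthonormalBasisIndex hfr j horth').val := hmem2
  exact Module.End.mem_eigenspace_iff.mp ((Submodule.mem_iInf _).mp hmem3 i)


set_option maxHeartbeats 1000000 in
lemma joint_diag {n : ℕ} {A X : Matrix (Fin n) (Fin n) ℂ} (hA : A.IsHermitian)
    (hX : Xᴴ * X = X * Xᴴ) (hAX : A * X = X * A) :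
    ∃ W : Matrix (Fin n) (Fin n) ℂ, W ∈ Matrix.unitaryGroup (Fin n) ℂ ∧
      ∃ a x : Fin n → ℂ,
        A = W * diagonal a * Wᴴ ∧ X = W * diagonal x * Wᴴ := by
  classical
  -- Hermitian and anti-Hermitian parts
  set H : Matrix (Fin n) (Fin n) ℂ := (2 : ℂ)⁻¹ • (X + Xᴴ) with hH
  set K : Matrix (Fin n) (Fin n) ℂ := (2 * Complex.I)⁻¹ • (X - Xᴴ) with hK
  have hHher : H.IsHermitian := by
    rw [Matrix.IsHermitian, hH, Matrix.conjTranspose_smul]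
    simp [Matrix.conjTranspose_add, add_comm]
  have hKher : K.IsHermitian := by
    rw [Matrix.IsHermitian, hK, Matrix.conjTranspose_smul]
    rw [Matrix.conjTranspose_sub, Matrix.conjTranspose_conjTranspose]
    have hc : star ((2 * Complex.I)⁻¹ : ℂ) = -(2 * Complex.I)⁻¹ := by
      have h2 : ((2 * Complex.I)⁻¹ : ℂ) = -(2⁻¹) * Complex.I := by
        rw [mul_inv, Complex.inv_I]; ring
      rw [h2]
      simp [Complex.ext_iff]
    rw [hc, neg_smul, ← smul_neg, neg_sub]
  have hXHK : X = H + Complex.I • K := by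
    rw [hH, hK, smul_smul]
    rw [show Complex.I * (2 * Complex.I)⁻¹ = (2 : ℂ)⁻¹ by
      rw [mul_inv, Complex.inv_I]; ring_nf; rw [Complex.I_sq]; ring]
    rw [← smul_add]
    rw [show X + Xᴴ + (X - Xᴴ) = (2 : ℂ) • X by module]
    rw [smul_smul]
    norm_num
  have hAXc : A * Xᴴ = Xᴴ * A := by
    have := congrArg Matrix.conjTranspose hAX
    rw [Matrix.conjTranspose_mul, Matrix.conjTranspose_mul, hA.eq] at this
    exact this.symm
  have hAH : A * H = H * A := by
    rw [hH, Matrix.mul_smul, Matrix.smul_mul, Matrix.mul_add, Matrix.add_mul, hAX, hAXc]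
  have hAK : A * K = K * A := by
    rw [hK, Matrix.mul_smul, Matrix.smul_mul, Matrix.mul_sub, Matrix.sub_mul, hAX, hAXc]
  have hHK : H * K = K * H := by
    have inner : (X + Xᴴ) * (X - Xᴴ) = (X - Xᴴ) * (X + Xᴴ) := by
      simp only [Matrix.add_mul, Matrix.sub_mul, Matrix.mul_add, Matrix.mul_sub]
      rw [hX]
      abel
    rw [hH, hK, Matrix.smul_mul, Matrix.mul_smul, Matrix.smul_mul, Matrix.mul_smul,
      inner, smul_comm]
  -- the three commuting symmetric operators
  set T : Fin 3 → Module.End ℂ (EuclideanSpace ℂ (Fin n)) :=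
    ![Matrix.toEuclideanLin A, Matrix.toEuclideanLin H, Matrix.toEuclideanLin K] with hT
  have hTsymm : ∀ i, (T i).IsSymmetric := by
    intro i
    fin_cases i
    · exact Matrix.isHermitian_iff_isSymmetric.mp hA
    · exact Matrix.isHermitian_iff_isSymmetric.mp hHher
    · exact Matrix.isHermitian_iff_isSymmetric.mp hKher
  have hcomm : Pairwise (Function.onFun Commute T) := by
    have key : ∀ M N : Matrix (Fin n) (Fin n) ℂ, M * N = N * M →
        Commute (Matrix.toEuclideanLin M) (Matrix.toEuclideanLin N) := by
      intro M N h
      show _ * _ = _ * _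
      have h1 : (Matrix.toEuclideanLin M) * (Matrix.toEuclideanLin N)
          = Matrix.toEuclideanLin (M * N) := (toEuclideanLin_mul M N).symm
      have h2 : (Matrix.toEuclideanLin N) * (Matrix.toEuclideanLin M)
          = Matrix.toEuclideanLin (N * M) := (toEuclideanLin_mul N M).symm
      rw [h1, h2, h]
    intro i j hij
    fin_cases i <;> fin_cases j <;> simp only [Function.onFun] <;>
      first
        | exact absurd rfl hij
        | exact key _ _ hAH | exact (key _ _ hAH).symm
        | exact key _ _ hAK | exact (key _ _ hAK).symm
        | exact key _ _ hHK | exact (key _ _ hHK).symm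
  have hfr : Module.finrank ℂ (EuclideanSpace ℂ (Fin n)) = n := by
    simp [finrank_euclideanSpace]
  obtain ⟨b, χ, hmem⟩ := joint_eigenbasis hfr T hTsymm hcomm
  -- the unitary matrix of columns
  set W : Matrix (Fin n) (Fin n) ℂ :=
    Matrix.of (fun i j => (WithLp.equiv 2 (Fin n → ℂ) (b j)) i) with hW
  have hWu : W ∈ Matrix.unitaryGroup (Fin n) ℂ := by
    rw [Matrix.mem_unitaryGroup_iff']
    ext j k
    rw [Matrix.mul_apply, Matrix.one_apply]
    have := orthonormal_iff_ite.mp b.orthonormal j k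
    rw [← this, PiLp.inner_apply]
    simp [Matrix.conjTranspose_apply, RCLike.inner_apply, hW]
    exact Finset.sum_congr rfl fun _ _ => mul_comm _ _
  have hcol : ∀ (M : Matrix (Fin n) (Fin n) ℂ) (c : Fin n → ℂ),
      (∀ j, Matrix.toEuclideanLin M (b j) = c j • b j) → M * W = W * diagonal c := by
    intro M c hc
    ext i j
    rw [Matrix.mul_apply, Matrix.mul_diagonal]
    have h1 : (M *ᵥ (WithLp.equiv 2 (Fin n → ℂ) (b j))) i
        = (WithLp.equiv 2 (Fin n → ℂ) (c j • b j)) i := by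
      rw [← hc j]; rfl
    rw [show ∑ k, M i k * W k j = (M *ᵥ (WithLp.equiv 2 (Fin n → ℂ) (b j))) i from rfl, h1]
    simp [hW]
    ring
  have hWstar : W * Wᴴ = 1 := Matrix.mem_unitaryGroup_iff.mp hWu
  have hdiag : ∀ (M : Matrix (Fin n) (Fin n) ℂ) (c : Fin n → ℂ),
      M * W = W * diagonal c → M = W * diagonal c * Wᴴ := by
    intro M c h
    calc M = M * (W * Wᴴ) := by rw [hWstar, Matrix.mul_one]
    _ = (M * W) * Wᴴ := by rw [Matrix.mul_assoc]
    _ = W * diagonal c * Wᴴ := by rw [h]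
  refine ⟨W, hWu, fun j => χ j 0, fun j => χ j 1 + Complex.I * χ j 2, ?_, ?_⟩
  · apply hdiag
    apply hcol
    intro j
    exact hmem j 0
  · apply hdiag
    apply hcol
    intro j
    have h1 : Matrix.toEuclideanLin X (b j)
        = Matrix.toEuclideanLin H (b j) + Complex.I • Matrix.toEuclideanLin K (b j) := by
      rw [hXHK]
      simp [map_add, LinearEquiv.map_smul]
    have h2 : Matrix.toEuclideanLin H (b j) = χ j 1 • b j := hmem j 1
    have h3 : Matrix.toEuclideanLin K (b j) = χ j 2 • b j := hmem j 2
    rw [h1, h2, h3, smul_smul, ← add_smul]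


lemma unitary_mul_left {n : ℕ} {W M D : Matrix (Fin n) (Fin n) ℂ}
    (hWW' : Wᴴ * W = 1) (h : M = W * D * Wᴴ) : Wᴴ * M = D * Wᴴ := by
  rw [h, ← Matrix.mul_assoc, ← Matrix.mul_assoc, hWW', Matrix.one_mul]

lemma unitary_mul_right {n : ℕ} {W M D : Matrix (Fin n) (Fin n) ℂ}
    (hWW' : Wᴴ * W = 1) (h : M = W * D * Wᴴ) : M * W = W * D := by
  rw [h, Matrix.mul_assoc (W * D) Wᴴ W, hWW', Matrix.mul_one]

lemma herFun_transfer {n : ℕ} {A : Matrix (Fin n) (Fin n) ℂ} (hA : A.IsHermitian)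
    {W : Matrix (Fin n) (Fin n) ℂ} (hWu : W ∈ Matrix.unitaryGroup (Fin n) ℂ)
    {a : Fin n → ℂ} (hAW : A = W * diagonal a * Wᴴ) :
    (∀ h : ℂ → ℂ, herFun hA h = W * diagonal (fun j => h (a j)) * Wᴴ) ∧
      (∀ j, ∃ i, a j = (hA.eigenvalues i : ℂ)) := by
  set U : Matrix (Fin n) (Fin n) ℂ := (hA.eigenvectorUnitary : Matrix (Fin n) (Fin n) ℂ) with hU
  have hUu : U ∈ Matrix.unitaryGroup (Fin n) ℂ := hA.eigenvectorUnitary.2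
  have hUU : U * Uᴴ = 1 := by
    have := Matrix.mem_unitaryGroup_iff.mp hUu
    simpa [Matrix.star_eq_conjTranspose] using this
  have hUU' : Uᴴ * U = 1 := by
    have := Matrix.mem_unitaryGroup_iff'.mp hUu
    simpa [Matrix.star_eq_conjTranspose] using this
  have hWW : W * Wᴴ = 1 := by
    have := Matrix.mem_unitaryGroup_iff.mp hWu
    simpa [Matrix.star_eq_conjTranspose] using this
  have hWW' : Wᴴ * W = 1 := by
    have := Matrix.mem_unitaryGroup_iff'.mp hWu
    simpa [Matrix.star_eq_conjTranspose] using this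
  have hspec : A = U * diagonal (fun i => (hA.eigenvalues i : ℂ)) * Uᴴ := by
    have := hA.spectral_theorem
    rw [Unitary.conjStarAlgAut_apply] at this
    exact this
  set Z : Matrix (Fin n) (Fin n) ℂ := Uᴴ * W with hZ
  have hZZ : Zᴴ * Z = 1 := by
    rw [hZ, Matrix.conjTranspose_mul, Matrix.conjTranspose_conjTranspose]
    calc Wᴴ * U * (Uᴴ * W) = Wᴴ * (U * Uᴴ) * W := by
          rw [Matrix.mul_assoc Wᴴ U, ← Matrix.mul_assoc U Uᴴ W, ← Matrix.mul_assoc]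
      _ = 1 := by rw [hUU, Matrix.mul_one, hWW']
  have hZZ' : Z * Zᴴ = 1 := mul_eq_one_comm.mp hZZ
  have hUZ : U * Z = W := by
    rw [hZ, ← Matrix.mul_assoc, hUU, Matrix.one_mul]
  have hdiagZ : diagonal (fun i => (hA.eigenvalues i : ℂ)) * Z = Z * diagonal a := by
    calc diagonal (fun i => (hA.eigenvalues i : ℂ)) * Z
        = (diagonal (fun i => (hA.eigenvalues i : ℂ)) * Uᴴ) * W := by rw [hZ, Matrix.mul_assoc]
      _ = (Uᴴ * A) * W := by rw [unitary_mul_left hUU' hspec]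
      _ = Uᴴ * (A * W) := by rw [Matrix.mul_assoc]
      _ = Uᴴ * (W * diagonal a) := by rw [unitary_mul_right hWW' hAW]
      _ = Z * diagonal a := by rw [hZ, Matrix.mul_assoc]
  have hentry : ∀ i j, Z i j ≠ 0 → (hA.eigenvalues i : ℂ) = a j := by
    intro i j hne
    have h2 := congrFun (congrFun hdiagZ i) j
    rw [Matrix.diagonal_mul, Matrix.mul_diagonal, mul_comm ((hA.eigenvalues i : ℂ)) (Z i j)]
      at h2
    exact mul_left_cancel₀ hne h2
  have hcolumn : ∀ j, ∃ i, Z i j ≠ 0 := by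
    intro j
    by_contra hall
    push_neg at hall
    have h2 := congrFun (congrFun hZZ j) j
    rw [Matrix.mul_apply, Matrix.one_apply_eq] at h2
    simp only [Matrix.conjTranspose_apply, hall, star_zero, zero_mul, mul_zero,
      Finset.sum_const_zero] at h2
    exact zero_ne_one h2
  constructor
  · intro h
    have hcomm : diagonal (fun i => h (hA.eigenvalues i : ℂ)) * Z
        = Z * diagonal (fun j => h (a j)) := by
      ext i j
      rw [Matrix.diagonal_mul, Matrix.mul_diagonal]
      by_cases hz : Z i j = 0
      · rw [hz, mul_zero, zero_mul]
      · rw [hentry i j hz, mul_comm]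
    have key : W * diagonal (fun j => h (a j)) * Wᴴ
        = U * diagonal (fun i => h (hA.eigenvalues i : ℂ)) * Uᴴ := by
      have hWH : Wᴴ = Zᴴ * Uᴴ := by rw [← hUZ, Matrix.conjTranspose_mul]
      rw [hWH, ← hUZ]
      calc U * Z * diagonal (fun j => h (a j)) * (Zᴴ * Uᴴ)
          = U * (Z * diagonal (fun j => h (a j))) * Zᴴ * Uᴴ := by
            rw [Matrix.mul_assoc U Z, ← Matrix.mul_assoc, ← Matrix.mul_assoc]
        _ = U * (diagonal (fun i => h (hA.eigenvalues i : ℂ)) * Z) * Zᴴ * Uᴴ := by rw [hcomm]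
        _ = U * diagonal (fun i => h (hA.eigenvalues i : ℂ)) * (Z * Zᴴ) * Uᴴ := by
            rw [← Matrix.mul_assoc, Matrix.mul_assoc _ Z Zᴴ]
        _ = U * diagonal (fun i => h (hA.eigenvalues i : ℂ)) * Uᴴ := by
            rw [hZZ', Matrix.mul_one]
    rw [herFun, key]
    simp [Matrix.star_eq_conjTranspose, hU]
  · intro j
    obtain ⟨i, hi⟩ := hcolumn j
    exact ⟨i, (hentry i j hi).symm⟩


lemma conj_mul_collapse {n : ℕ} {W : Matrix (Fin n) (Fin n) ℂ}
    (hWW' : Wᴴ * W = 1) (D E : Matrix (Fin n) (Fin n) ℂ) :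
    (W * D * Wᴴ) * (W * E * Wᴴ) = W * (D * E) * Wᴴ := by
  rw [Matrix.mul_assoc (W * D) Wᴴ (W * E * Wᴴ), ← Matrix.mul_assoc Wᴴ (W * E) Wᴴ,
    ← Matrix.mul_assoc Wᴴ W E, hWW', Matrix.one_mul, ← Matrix.mul_assoc (W * D) E Wᴴ,
    Matrix.mul_assoc W D E]

lemma dDist_le {n : ℕ} {A : Matrix (Fin n) (Fin n) ℂ} (hA : A.IsHermitian) (i : Fin n) :
    dDist hA ≤ 1 - |hA.eigenvalues i| :=
  ciInf_le (Set.Finite.bddBelow (Set.finite_range _)) i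

lemma dDist_pos {n : ℕ} (hn : 1 ≤ n) {A : Matrix (Fin n) (Fin n) ℂ} (hA : A.IsHermitian)
    (hAspec : ∀ i, |hA.eigenvalues i| < 1) : 0 < dDist hA := by
  haveI : Nonempty (Fin n) := ⟨⟨0, hn⟩⟩
  obtain ⟨i0, hi0⟩ := Finite.exists_min (fun i => 1 - |hA.eigenvalues i|)
  have h1 : 0 < 1 - |hA.eigenvalues i0| := by linarith [hAspec i0]
  exact lt_of_lt_of_le h1 (le_ciInf hi0)

lemma scalar_bound {f g : ℂ → ℂ} (hf : MemH f) (hg : MemH g) {lam d : ℝ}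
    (h1 : |lam| < 1) (hd : 0 < d) (hdl : d ≤ 1 - |lam|) (x : ℂ) :
    ‖f ↑lam * x * g ↑lam + x‖ ≤ 2 / d ^ 2 * ((lam ^ 2 + 1) * ‖x‖) := by
  have hzf : ‖(lam : ℂ)‖ < 1 := by rwa [Complex.norm_real, Real.norm_eq_abs]
  have hbf := memH_abs_le hf hzf
  have hbg := memH_abs_le hg hzf
  rw [Complex.norm_real, Real.norm_eq_abs] at hbf hbg
  have hfactor : f ↑lam * x * g ↑lam + x = (f ↑lam * g ↑lam + 1) * x := by ring
  rw [hfactor, norm_mul]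
  have habs1 : ‖f ↑lam * g ↑lam + 1‖
      ≤ ‖f ↑lam‖ * ‖g ↑lam‖ + 1 := by
    calc ‖f ↑lam * g ↑lam + 1‖
        ≤ ‖f ↑lam * g ↑lam‖ + ‖1‖ := norm_add_le _ _
      _ = ‖f ↑lam‖ * ‖g ↑lam‖ + 1 := by rw [norm_mul, norm_one]
  set t := |lam| with htdef
  have ht0 : 0 ≤ t := abs_nonneg lam
  have hs : 0 < 1 - t := by linarith
  have habs2 : ‖f ↑lam‖ * ‖g ↑lam‖ + 1
      ≤ (1 + t) / (1 - t) * ((1 + t) / (1 - t)) + 1 := by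
    have h3 : 0 ≤ (1 + t) / (1 - t) := by positivity
    have := mul_le_mul hbf hbg (norm_nonneg _) h3
    linarith
  have hsq : t ^ 2 = lam ^ 2 := sq_abs lam
  have habs3 : (1 + t) / (1 - t) * ((1 + t) / (1 - t)) + 1 ≤ 2 / d ^ 2 * (lam ^ 2 + 1) := by
    have hdd : d ^ 2 ≤ (1 - t) ^ 2 := by nlinarith
    have e1 : (1 + t) / (1 - t) * ((1 + t) / (1 - t)) + 1 = (2 + 2 * t ^ 2) / (1 - t) ^ 2 := by
      field_simp
      ring
    have e2 : (2 + 2 * t ^ 2) / (1 - t) ^ 2 ≤ (2 + 2 * t ^ 2) / d ^ 2 :=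
      div_le_div_of_nonneg_left (by positivity) (by positivity) hdd
    have e3 : (2 + 2 * t ^ 2) / d ^ 2 = 2 / d ^ 2 * (lam ^ 2 + 1) := by
      rw [← hsq]
      field_simp
      ring
    rw [e1]
    rw [e3] at e2
    exact e2
  have hchain := le_trans habs1 (le_trans habs2 habs3)
  calc ‖f ↑lam * g ↑lam + 1‖ * ‖x‖
      ≤ 2 / d ^ 2 * (lam ^ 2 + 1) * ‖x‖ :=
        mul_le_mul_of_nonneg_right hchain (norm_nonneg x)
    _ = 2 / d ^ 2 * ((lam ^ 2 + 1) * ‖x‖) := by ring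



lemma conj_conjTranspose {n : ℕ} (W D : Matrix (Fin n) (Fin n) ℂ) :
    (W * D * Wᴴ)ᴴ = W * Dᴴ * Wᴴ := by
  rw [Matrix.conjTranspose_mul, Matrix.conjTranspose_mul, Matrix.conjTranspose_conjTranspose,
    ← Matrix.mul_assoc]

lemma diag_conj_unitary {n : ℕ} {W : Matrix (Fin n) (Fin n) ℂ}
    (hWu : W ∈ Matrix.unitaryGroup (Fin n) ℂ) (u : Fin n → ℂ)
    (hu : ∀ j, ‖u j‖ = 1) :
    W * diagonal u * Wᴴ ∈ Matrix.unitaryGroup (Fin n) ℂ := by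
  have hWW : W * Wᴴ = 1 := by
    have := Matrix.mem_unitaryGroup_iff.mp hWu
    simpa [Matrix.star_eq_conjTranspose] using this
  have hWW' : Wᴴ * W = 1 := by
    have := Matrix.mem_unitaryGroup_iff'.mp hWu
    simpa [Matrix.star_eq_conjTranspose] using this
  rw [Matrix.mem_unitaryGroup_iff', Matrix.star_eq_conjTranspose, conj_conjTranspose,
    Matrix.diagonal_conjTranspose, conj_mul_collapse hWW', Matrix.diagonal_mul_diagonal]
  have : (fun j => star (u j) * u j) = fun _ => (1 : ℂ) := by
    funext j
    rw [Complex.star_def, mul_comm, Complex.mul_conj]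
    rw [Complex.normSq_eq_norm_sq, hu j]
    norm_num
  calc W * diagonal (fun j => star (u j) * u j) * Wᴴ
      = W * 1 * Wᴴ := by rw [this, Matrix.diagonal_one]
    _ = 1 := by rw [Matrix.mul_one, hWW]

open scoped MatrixOrder in
lemma matAbs_eq_of_sq {n : ℕ} (X S : Matrix (Fin n) (Fin n) ℂ) (hS : S.PosSemidef)
    (hSq : S ^ 2 = Xᴴ * X) : matAbs X = S := by
  have hXX := Matrix.posSemidef_conjTranspose_mul_self X
  have hfun : (fun x : ℝ => ((NNReal.sqrt x.toNNReal : NNReal) : ℝ)) = Real.sqrt := by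
    funext x
    rw [Real.coe_sqrt, Real.coe_toNNReal']
    rcases le_total x 0 with h | h
    · rw [max_eq_right h, Real.sqrt_zero, Real.sqrt_eq_zero'.mpr h]
    · rw [max_eq_left h]
  have e1 : matAbs X = CFC.sqrt (Xᴴ * X) := by
    rw [CFC.sqrt_eq_cfc, cfc_nnreal_eq_real _ _ hXX.nonneg, hfun, hXX.1.cfc_eq]
    rfl
  rw [e1]
  exact CFC.sqrt_unique (by rw [← pow_two]; exact hSq) hS.nonneg

/-- **Corollary 2.3 (first inequality), Hermitian matrix case.** -/
theorem stmt3 {n : ℕ} (hn : 1 ≤ n)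
    {A : Matrix (Fin n) (Fin n) ℂ} (hA : A.IsHermitian)
    (hAspec : ∀ i, |hA.eigenvalues i| < 1)
    {f g : ℂ → ℂ} (hf : MemH f) (hg : MemH g)
    (X : Matrix (Fin n) (Fin n) ℂ) (hX : Xᴴ * X = X * Xᴴ) (hAX : A * X = X * A)
    (N : Matrix (Fin n) (Fin n) ℂ → ℝ) (hN : IsUnitarilyInvariantNorm N) :
    N (herFun hA f * X * herFun hA g + X) ≤
      (2 / dDist hA ^ 2) * N (A * matAbs X * A + matAbs X) := by
  classical
  obtain ⟨hN1, hN2, hN3, hN4⟩ := hN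
  obtain ⟨W, hWu, a, x, hAeq, hXeq⟩ := joint_diag hA hX hAX
  have hWW : W * Wᴴ = 1 := by
    have := Matrix.mem_unitaryGroup_iff.mp hWu
    simpa [Matrix.star_eq_conjTranspose] using this
  have hWW' : Wᴴ * W = 1 := by
    have := Matrix.mem_unitaryGroup_iff'.mp hWu
    simpa [Matrix.star_eq_conjTranspose] using this
  have sum_collapse : ∀ D E : Matrix (Fin n) (Fin n) ℂ,
      W * D * Wᴴ + W * E * Wᴴ = W * (D + E) * Wᴴ := by
    intro D E
    rw [Matrix.mul_add, Matrix.add_mul]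
  obtain ⟨hher, hspec⟩ := herFun_transfer hA hWu hAeq
  choose lami hlami using hspec
  set lam : Fin n → ℝ := fun j => hA.eigenvalues (lami j) with hlamdef
  have ha : ∀ j, a j = ((lam j : ℝ) : ℂ) := fun j => hlami j
  have hd : 0 < dDist hA := dDist_pos hn hA hAspec
  have hdle : ∀ j, dDist hA ≤ 1 - |lam j| := fun j => dDist_le hA (lami j)
  have hlam1 : ∀ j, |lam j| < 1 := fun j => hAspec (lami j)
  set c : ℝ := 2 / dDist hA ^ 2 with hcdef
  have hc0 : 0 ≤ c := by positivity
  have hXc : Xᴴ = W * diagonal (fun j => star (x j)) * Wᴴ := by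
    rw [hXeq, conj_conjTranspose, Matrix.diagonal_conjTranspose]
    rfl
  set R0 : Fin n → ℂ := fun j => ((‖x j‖ : ℝ) : ℂ) with hR0
  have hSsq : (W * diagonal R0 * Wᴴ) ^ 2 = Xᴴ * X := by
    rw [pow_two, conj_mul_collapse hWW', hXc, hXeq, conj_mul_collapse hWW',
      Matrix.diagonal_mul_diagonal, Matrix.diagonal_mul_diagonal]
    refine congrArg (fun v => W * diagonal v * Wᴴ) (funext fun j => ?_)
    show ((‖x j‖ : ℝ) : ℂ) * ((‖x j‖ : ℝ) : ℂ) = star (x j) * x j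
    rw [Complex.star_def, mul_comm (starRingEnd ℂ (x j)) (x j), Complex.mul_conj,
      Complex.normSq_eq_norm_sq]
    push_cast
    ring
  have hS_psd : (W * diagonal R0 * Wᴴ).PosSemidef := by
    apply Matrix.PosSemidef.mul_mul_conjTranspose_same
    rw [Matrix.posSemidef_diagonal_iff]
    intro j
    show (0 : ℂ) ≤ ((‖x j‖ : ℝ) : ℂ)
    exact_mod_cast norm_nonneg (x j)
  have habsX : matAbs X = W * diagonal R0 * Wᴴ := by
    exact matAbs_eq_of_sq X _ hS_psd hSsq
  set tdiag : Fin n → ℂ := fun j => f (a j) * x j * g (a j) + x j with htdiag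
  have hLHS : herFun hA f * X * herFun hA g + X = W * diagonal tdiag * Wᴴ := by
    rw [hher f, hher g, hXeq, conj_mul_collapse hWW', conj_mul_collapse hWW',
      sum_collapse, Matrix.diagonal_mul_diagonal, Matrix.diagonal_mul_diagonal,
      Matrix.diagonal_add]
  set R : Fin n → ℝ := fun j => (lam j ^ 2 + 1) * ‖x j‖ with hRdef
  have hRpos : ∀ j, 0 ≤ R j := by
    intro j
    apply mul_nonneg (by positivity) (norm_nonneg _)
  set Rc : Fin n → ℂ := fun j => ((R j : ℝ) : ℂ) with hRc
  have hRHS : A * matAbs X * A + matAbs X = W * diagonal Rc * Wᴴ := by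
    rw [habsX, hAeq, conj_mul_collapse hWW', conj_mul_collapse hWW', sum_collapse,
      Matrix.diagonal_mul_diagonal, Matrix.diagonal_mul_diagonal, Matrix.diagonal_add]
    refine congrArg (fun v => W * diagonal v * Wᴴ) (funext fun j => ?_)
    show a j * ((‖x j‖ : ℝ) : ℂ) * a j + ((‖x j‖ : ℝ) : ℂ)
      = (((lam j ^ 2 + 1) * ‖x j‖ : ℝ) : ℂ)
    rw [ha j]
    push_cast
    ring
  have hbound : ∀ j, ‖tdiag j‖ ≤ c * R j := by
    intro j
    have := scalar_bound hf hg (hlam1 j) hd (hdle j) (x j)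
    rw [htdiag]
    show ‖f (a j) * x j * g (a j) + x j‖ ≤ c * R j
    rw [ha j]
    calc ‖f ↑(lam j) * x j * g ↑(lam j) + x j‖
        ≤ 2 / dDist hA ^ 2 * ((lam j ^ 2 + 1) * ‖x j‖) := this
      _ = c * R j := by rw [hcdef, hRdef]
  choose u1 u2 hu1 hu2 hu using
    fun j => exists_unimodular_pair (tdiag j) (c * R j) (mul_nonneg hc0 (hRpos j)) (hbound j)
  set V1 : Matrix (Fin n) (Fin n) ℂ := W * diagonal u1 * Wᴴ with hV1
  set V2 : Matrix (Fin n) (Fin n) ℂ := W * diagonal u2 * Wᴴ with hV2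
  have hV1u : V1 ∈ Matrix.unitaryGroup (Fin n) ℂ := diag_conj_unitary hWu u1 hu1
  have hV2u : V2 ∈ Matrix.unitaryGroup (Fin n) ℂ := diag_conj_unitary hWu u2 hu2
  set z : ℂ := ((c : ℝ) : ℂ) / 2 with hz
  have hdiagt : diagonal tdiag
      = z • (diagonal u1 * diagonal Rc + diagonal u2 * diagonal Rc) := by
    rw [Matrix.diagonal_mul_diagonal, Matrix.diagonal_mul_diagonal, Matrix.diagonal_add,
      ← Matrix.diagonal_smul]
    refine congrArg Matrix.diagonal (funext fun j => ?_)
    show tdiag j = z * (u1 j * (((lam j ^ 2 + 1) * ‖x j‖ : ℝ) : ℂ)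
      + u2 j * (((lam j ^ 2 + 1) * ‖x j‖ : ℝ) : ℂ))
    rw [hu j]
    show ((((2 : ℝ) / dDist hA ^ 2) * ((lam j ^ 2 + 1) * ‖x j‖) : ℝ) : ℂ) / 2
        * (u1 j + u2 j) = _
    rw [hz, hcdef]
    push_cast
    ring
  have hmain : herFun hA f * X * herFun hA g + X
      = z • (V1 * (A * matAbs X * A + matAbs X) + V2 * (A * matAbs X * A + matAbs X)) := by
    rw [hLHS, hRHS, hdiagt, Matrix.mul_smul, Matrix.smul_mul]
    congr 1
    rw [Matrix.mul_add, Matrix.add_mul, hV1, hV2, conj_mul_collapse hWW',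
      conj_mul_collapse hWW']
  have hnormz : ‖z‖ = c / 2 := by
    rw [hz, norm_div, Complex.norm_real, Real.norm_eq_abs, abs_of_nonneg hc0]
    norm_num
  have hNleft : ∀ (V M : Matrix (Fin n) (Fin n) ℂ), V ∈ Matrix.unitaryGroup (Fin n) ℂ →
      N (V * M) = N M := by
    intro V M hV
    have := hN4 ⟨V, hV⟩ 1 M
    simpa using this
  rw [hmain, hN2]
  calc ‖z‖ * N (V1 * (A * matAbs X * A + matAbs X) + V2 * (A * matAbs X * A + matAbs X))
      ≤ ‖z‖ * (N (V1 * (A * matAbs X * A + matAbs X)) + N (V2 * (A * matAbs X * A + matAbs X))) :=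
        mul_le_mul_of_nonneg_left (hN3 _ _) (norm_nonneg z)
    _ = c / 2 * (N (A * matAbs X * A + matAbs X) + N (A * matAbs X * A + matAbs X)) := by
        rw [hnormz, hNleft _ _ hV1u, hNleft _ _ hV2u]
    _ = 2 / dDist hA ^ 2 * N (A * matAbs X * A + matAbs X) := by
        rw [hcdef]; ring
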